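/- Eigenvalue identity for the invariant operator attached to maximal minors (the case d = 1 of the Bernstein–Sato polynomial of the ideal of maximal minors): there exists a nonzero constant c, depending only on m and n, such that for every natural number s and every choice of column subsets I_1,…,I_s ⊆ {1,…,n} each of cardinality m, Σ_{I ⊆ {1,…,n}, |I| = m} det(∂X_I)( det(X_I) · ∏_{j=1}^{s} det(X_{I_j}) ) = c·(∏_{i=n-m+1}^{n}(s+i))·∏_{j=1}^{s} det(X_{I_j}). -/

import Mathlib

open MvPolynomial

/-- The partial-derivative operator `∂_{ab}` as a linear endomorphism of
`ℂ[x_{ab} : 1 ≤ a ≤ m, 1 ≤ b ≤ n]`. -/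
noncomputable def pd7 {m n : ℕ} (v : Fin m × Fin n) :
    Module.End ℂ (MvPolynomial (Fin m × Fin n) ℂ) :=
  (pderiv v).toLinearMap

/-- The increasing enumeration of the columns in a subset `I ⊆ {1,…,n}` of
cardinality `m`. -/
def colEmb7 {m n : ℕ} (I : {I : Finset (Fin n) // I.card = m}) : Fin m → Fin n :=
  fun j => ((I.1.orderIsoOfFin I.2 j : I.1) : Fin n)

/-- The maximal minor `det(X_I)` of the generic `m × n` matrix on the columns in `I`. -/
noncomputable def maxMinor7 {m n : ℕ} (I : {I : Finset (Fin n) // I.card = m}) :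
    MvPolynomial (Fin m × Fin n) ℂ :=
  (Matrix.of fun a j => (X (a, colEmb7 I j) : MvPolynomial (Fin m × Fin n) ℂ)).det

/-- The differential operator `det(∂X_I) = Σ_σ sgn(σ) ∏_a ∂_{a,σ(a)}`, the sum being
over bijections `σ` from the rows to the columns in `I` (written via the increasing
enumeration of `I`; the operators `∂_{ab}` pairwise commute, so the order of
composition is immaterial). -/
noncomputable def minorOp7 {m n : ℕ} (I : {I : Finset (Fin n) // I.card = m}) :
    Module.End ℂ (MvPolynomial (Fin m × Fin n) ℂ) :=
  ∑ σ : Equiv.Perm (Fin m),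
    (Equiv.Perm.sign σ : ℤ) • (List.ofFn fun a => pd7 (a, colEmb7 I (σ a))).prod

namespace MME
open Equiv Finset

variable {m n : ℕ}

local notation "P" => MvPolynomial (Fin m × Fin n) ℂ
local notation "En" => Module.End ℂ (MvPolynomial (Fin m × Fin n) ℂ)

/-- left multiplication operator -/
noncomputable def ml (f : P) : En := Algebra.lmul ℂ _ f

lemma ml_apply (f g : P) : ml f g = f * g := rfl

lemma ml_mul (f g : P) : ml (m := m) (n := n) (f * g) = ml f * ml g := map_mul _ _ _

lemma ml_one : ml (m := m) (n := n) 1 = 1 := map_one _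

lemma ml_sum {ι : Type} (s : Finset ι) (f : ι → P) :
    ml (∑ x ∈ s, f x) = ∑ x ∈ s, ml (f x) :=
  map_sum (Algebra.lmul ℂ (MvPolynomial (Fin m × Fin n) ℂ)) f s

lemma ml_zsmul (z : ℤ) (f : P) : ml (z • f) = z • ml f :=
  map_zsmul (Algebra.lmul ℂ (MvPolynomial (Fin m × Fin n) ℂ)) z f

lemma pd7_apply (v : Fin m × Fin n) (f : P) : pd7 v f = pderiv v f := rfl

lemma pderiv_comm' (v w : Fin m × Fin n) (f : P) :
    pderiv v (pderiv w f) = pderiv w (pderiv v f) := by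
  induction f using MvPolynomial.induction_on' with
  | monomial s a =>
    simp only [pderiv_monomial]
    rcases eq_or_ne v w with rfl | hvw
    · rfl
    · have h1 : (s - fun₀ | w => 1) v = s v := by
        rw [Finsupp.tsub_apply, Finsupp.single_apply, if_neg (by simpa using hvw.symm)]
        simp
      have h2 : (s - fun₀ | v => 1) w = s w := by
        rw [Finsupp.tsub_apply, Finsupp.single_apply, if_neg (by simpa using hvw)]
        simp
      rw [h1, h2, tsub_tsub, tsub_tsub]
      congr 1
      · rw [add_comm]
      · ring
  | add p q hp hq => simp [map_add, hp, hq]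

lemma pd7_comm (v w : Fin m × Fin n) : pd7 v * pd7 w = pd7 w * pd7 v := by
  apply LinearMap.ext; intro f
  exact pderiv_comm' v w f

lemma pd7_ml_X (v w : Fin m × Fin n) :
    pd7 v * ml (X w) = ml (X w) * pd7 v + if v = w then 1 else 0 := by
  apply LinearMap.ext; intro f
  simp only [Module.End.mul_apply, LinearMap.add_apply, ml_apply, pd7_apply, pderiv_mul,
    pderiv_X]
  rcases eq_or_ne v w with rfl | hvw
  · simp [Pi.single_apply]
    ring
  · simp [Pi.single_apply, Ne.symm hvw, hvw]

/-- product of partial derivative operators -/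
noncomputable def Dpr {k : ℕ} (g : Fin k → Fin m × Fin n) : En :=
  (List.ofFn fun i => pd7 (g i)).prod

lemma Dpr_zero (g : Fin 0 → Fin m × Fin n) : Dpr g = 1 := rfl

lemma Dpr_succ {k : ℕ} (g : Fin (k + 1) → Fin m × Fin n) :
    Dpr g = pd7 (g 0) * Dpr (g ∘ Fin.succ) := by
  simp [Dpr, List.ofFn_succ, Function.comp]

lemma Dpr_comp {k : ℕ} (g : Fin k → Fin m × Fin n) (e : Perm (Fin k)) :
    Dpr (g ∘ e) = Dpr g := by
  unfold Dpr
  have h2 : (List.ofFn (pd7 ∘ (g ∘ e))).Perm (List.ofFn (pd7 ∘ g)) := by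
    exact Equiv.Perm.ofFn_comp_perm e (pd7 ∘ g)
  have h3 : List.Pairwise Commute (List.ofFn (pd7 ∘ (g ∘ e))) := by
    rw [List.pairwise_ofFn]
    intro i j _
    exact pd7_comm _ _
  exact List.Perm.prod_eq' h2 h3

lemma Dpr_ml_X {k : ℕ} (g : Fin (k + 1) → Fin m × Fin n) (w : Fin m × Fin n) :
    Dpr g * ml (X w) = ml (X w) * Dpr g +
      ∑ j : Fin (k + 1), if g j = w then Dpr (g ∘ j.succAbove) else 0 := by
  induction k with
  | zero =>
    have h1 : Dpr g = pd7 (g 0) := by rw [Dpr_succ g, Dpr_zero, mul_one]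
    have h2 : Dpr (g ∘ Fin.succAbove 0) = 1 := Dpr_zero _
    rw [Fin.sum_univ_one, h1, h2, pd7_ml_X]
  | succ k ih =>
    rw [Dpr_succ g, mul_assoc, ih (g ∘ Fin.succ), mul_add, ← mul_assoc,
      pd7_ml_X (g 0) w, add_mul, Finset.mul_sum]
    conv_rhs => rw [Fin.sum_univ_succ]
    have e1 : ∀ j : Fin (k + 1),
        pd7 (g 0) * (if (g ∘ Fin.succ) j = w then Dpr ((g ∘ Fin.succ) ∘ j.succAbove) else 0)
          = if g j.succ = w then Dpr (g ∘ (j.succ).succAbove) else 0 := by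
      intro j
      have e2 : Dpr (g ∘ (j.succ).succAbove) = pd7 (g 0) * Dpr ((g ∘ Fin.succ) ∘ j.succAbove) := by
        rw [Dpr_succ]
        refine congrArg₂ (· * ·) ?_ ?_
        · have h0 : (j.succ.succAbove 0) = 0 := Fin.succ_succAbove_zero j
          simp only [Function.comp_apply, h0]
        · congr 1
          funext i
          simp only [Function.comp_apply, Fin.succ_succAbove_succ]
      simp only [Function.comp_apply]
      split_ifs with h
      · exact e2.symm
      · rw [mul_zero]
    rw [Finset.sum_congr rfl fun j _ => e1 j]
    have e0 : g ∘ (0 : Fin (k + 2)).succAbove = g ∘ Fin.succ := by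
      rw [Fin.succAbove_zero]
    rw [e0]
    have e3 : (if g 0 = w then (1:En) else 0) * Dpr (g ∘ Fin.succ)
        = if g 0 = w then Dpr (g ∘ Fin.succ) else 0 := by split_ifs <;> simp
    rw [e3, mul_assoc]
    abel

/-- polarization operator `E_{ab} = Σ_c x_{ac} ∂_{bc}` -/
noncomputable def Eop (a b : Fin m) : En := ∑ c : Fin n, ml (X (a, c)) * pd7 (b, c)

lemma Eop_apply (a b : Fin m) (f : P) :
    Eop a b f = ∑ c : Fin n, X (a, c) * pderiv (b, c) f := by
  simp [Eop, LinearMap.sum_apply, Module.End.mul_apply, ml_apply, pd7_apply]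

lemma Eop_mul (a b : Fin m) (f g : P) :
    Eop a b (f * g) = Eop a b f * g + f * Eop a b g := by
  simp only [Eop_apply, pderiv_mul, mul_add, Finset.sum_add_distrib, Finset.sum_mul,
    Finset.mul_sum]
  congr 1
  · exact Finset.sum_congr rfl fun c _ => by ring
  · exact Finset.sum_congr rfl fun c _ => by ring

lemma Eop_prod (a b : Fin m) {ι : Type} [DecidableEq ι] (s : Finset ι) (f : ι → P) :
    Eop a b (∏ i ∈ s, f i) = ∑ i ∈ s, (∏ j ∈ s.erase i, f j) * Eop a b (f i) := by
  induction s using Finset.induction_on with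
  | empty => simp [Eop_apply]
  | insert x s hx ih =>
    rw [Finset.prod_insert hx, Eop_mul, ih, Finset.sum_insert hx, Finset.erase_insert hx,
      Finset.mul_sum]
    congr 1
    · ring
    · refine Finset.sum_congr rfl fun i hi => ?_
      rw [Finset.erase_insert_of_ne (by rintro rfl; exact hx hi),
        Finset.prod_insert (fun hmem => hx (Finset.mem_of_mem_erase hmem))]
      ring

lemma Eop_X (a b r : Fin m) (c : Fin n) :
    Eop a b (X (r, c) : P) = if r = b then X (a, c) else 0 := by
  rw [Eop_apply]
  simp only [pderiv_X, Pi.single_apply, Prod.mk.injEq, mul_ite, mul_one, mul_zero]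
  rcases eq_or_ne r b with rfl | h
  · simp only [true_and]
    rw [Finset.sum_ite_eq univ c fun c' => (X (a, c') : P), if_pos (Finset.mem_univ c)]
    simp
  · have : ∀ c' : Fin n, (if r = b ∧ c = c' then (X (a, c') : P) else 0) = 0 := by
      intro c'; rw [if_neg]; rintro ⟨rfl, -⟩; exact h rfl
    rw [Finset.sum_congr rfl fun c' _ => this c', Finset.sum_const, smul_zero, if_neg h]

lemma Eop_det (a b : Fin m) (c : Fin m → Fin n) :
    Eop a b (Matrix.of fun r j => (X (r, c j) : P)).det
      = ((Matrix.of fun r j => (X (r, c j) : P)).updateRow b fun j => (X (a, c j) : P)).det := by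
  set M : Matrix (Fin m) (Fin m) P := Matrix.of fun r j => (X (r, c j) : P) with hM
  set N := M.updateRow b (fun j => (X (a, c j) : P)) with hN
  rw [Matrix.det_apply, Matrix.det_apply, map_sum]
  refine Finset.sum_congr rfl fun σ _ => ?_
  rw [Units.smul_def, Units.smul_def, map_zsmul]
  congr 1
  rw [Eop_prod]
  have hterm : ∀ j : Fin m, (∏ j' ∈ univ.erase j, M (σ j') j') * Eop a b (M (σ j) j)
      = if σ j = b then (∏ j' ∈ univ.erase j, M (σ j') j') * X (a, c j) else 0 := by
    intro j
    have h0 : M (σ j) j = X (σ j, c j) := rfl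
    rw [h0, Eop_X]
    split_ifs with h
    · rfl
    · rw [mul_zero]
  rw [Finset.sum_congr rfl fun j _ => hterm j]
  rw [Finset.sum_eq_single (σ⁻¹ b)]
  · rw [if_pos (show σ (σ⁻¹ b) = b from σ.apply_symm_apply b)]
    rw [← Finset.mul_prod_erase univ (fun j => N (σ j) j) (Finset.mem_univ (σ⁻¹ b))]
    have h1 : N (σ (σ⁻¹ b)) (σ⁻¹ b) = X (a, c (σ⁻¹ b)) := by
      rw [Equiv.Perm.inv_def, Equiv.apply_symm_apply, hN, Matrix.updateRow_self]
    have h2 : ∀ j' ∈ univ.erase (σ⁻¹ b), N (σ j') j' = M (σ j') j' := by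
      intro j' hj'
      have hne : σ j' ≠ b := fun hh =>
        (Finset.mem_erase.mp hj').1 (by rw [← hh]; exact (σ.symm_apply_apply _).symm)
      rw [hN, Matrix.updateRow_ne hne]
    rw [h1, Finset.prod_congr rfl h2, mul_comm]
  · intro j _ hj
    rw [if_neg]
    intro hh
    exact hj (by rw [← hh]; exact (σ.symm_apply_apply _).symm)
  · intro h; exact absurd (Finset.mem_univ _) h

lemma Eop_maxMinor (a b : Fin m) (I : {I : Finset (Fin n) // I.card = m}) :
    Eop a b (maxMinor7 I) = if a = b then maxMinor7 I else 0 := by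
  have h := Eop_det a b (colEmb7 I)
  have hMm : maxMinor7 I = (Matrix.of fun r j => (X (r, colEmb7 I j) : P)).det := rfl
  rw [hMm, h]
  rcases eq_or_ne a b with rfl | hab
  · rw [if_pos rfl]
    congr 1
    have h3 : (fun j => (X (a, colEmb7 I j) : P))
        = (Matrix.of fun r j => (X (r, colEmb7 I j) : P)) a := rfl
    rw [h3, Matrix.updateRow_eq_self]
  · rw [if_neg hab]
    apply Matrix.det_zero_of_row_eq hab
    rw [Matrix.updateRow_ne hab, Matrix.updateRow_self]
    rfl

lemma Eop_prodMinors (a b : Fin m) {s : ℕ} (Is : Fin s → {I : Finset (Fin n) // I.card = m}) :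
    Eop a b (∏ j : Fin s, maxMinor7 (Is j))
      = if a = b then (s : ℂ) • ∏ j : Fin s, maxMinor7 (Is j) else 0 := by
  rw [Eop_prod]
  rcases eq_or_ne a b with rfl | hab
  · rw [if_pos rfl]
    have hterm : ∀ j : Fin s,
        (∏ j' ∈ univ.erase j, maxMinor7 (Is j')) * Eop a a (maxMinor7 (Is j))
          = ∏ j' : Fin s, maxMinor7 (Is j') := by
      intro j
      rw [Eop_maxMinor, if_pos rfl, mul_comm]
      exact Finset.mul_prod_erase univ (fun j' => maxMinor7 (Is j')) (Finset.mem_univ j)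
    rw [Finset.sum_congr rfl fun j _ => hterm j, Finset.sum_const, Finset.card_univ,
      Fintype.card_fin]
    exact (Nat.cast_smul_eq_nsmul ℂ s _).symm
  · rw [if_neg hab]
    rw [Finset.sum_congr rfl fun j _ => by rw [Eop_maxMinor, if_neg hab, mul_zero]]
    exact Finset.sum_const_zero

/-- anti-normally ordered contraction operator -/
noncomputable def Aop (n : ℕ) {m : ℕ} (k : ℕ) (a b : Fin k → Fin m) :
    Module.End ℂ (MvPolynomial (Fin m × Fin n) ℂ) :=
  ∑ d : Fin k → Fin n, Dpr (fun i => (b i, d i)) * ml (∏ i, X (a i, d i))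

lemma Aop_zero (a b : Fin 0 → Fin m) : Aop n 0 a b = 1 := by
  rw [Aop]
  rw [Finset.sum_congr rfl fun d _ => by rw [Dpr_zero, Fin.prod_univ_zero, ml_one, one_mul]]
  rw [Finset.sum_const, Finset.card_univ]
  have : Fintype.card (Fin 0 → Fin n) = 1 := by simp
  rw [this, one_smul]

lemma Dpr_reorder {k : ℕ} (b : Fin (k + 1) → Fin m) (dt : Fin k → Fin n) (j' : Fin k) :
    Dpr ((fun i : Fin (k + 1) => (b i, (Fin.cons (dt j') dt : Fin (k + 1) → Fin n) i)) ∘ (j'.succ).succAbove)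
      = Dpr (fun i : Fin k => (Function.update (b ∘ Fin.succ) j' (b 0) i, dt i)) := by
  cases k with
  | zero => exact j'.elim0
  | succ k' =>
    have hfun : (fun i : Fin (k' + 2) => (b i, (Fin.cons (dt j') dt : Fin (k' + 2) → Fin n) i)) ∘ (j'.succ).succAbove
        = (fun i : Fin (k' + 1) => (Function.update (b ∘ Fin.succ) j' (b 0) i, dt i))
            ∘ ⇑(j'.cycleRange.symm : Equiv.Perm (Fin (k' + 1))) := by
      funext x
      refine Fin.cases ?_ ?_ x
      · have h0 : (j'.succ).succAbove 0 = 0 := Fin.succ_succAbove_zero j'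
        simp only [Function.comp_apply, h0, Fin.cons_zero]
        rw [Fin.cycleRange_symm_zero, Function.update_self]
      · intro y
        have h1 : (j'.succ).succAbove y.succ = (j'.succAbove y).succ :=
          Fin.succ_succAbove_succ j' y
        simp only [Function.comp_apply, h1, Fin.cons_succ]
        rw [Fin.cycleRange_symm_succ, Function.update_of_ne (Fin.succAbove_ne j' y)]
        rfl
    rw [hfun, Dpr_comp]

lemma sum_pair_ite {β : Type} [AddCommMonoid β] (u a0 : Fin m) (v : Fin n) (W : Fin n → β) :
    (∑ d0 : Fin n, if (u, v) = (a0, d0) then W d0 else 0) = if u = a0 then W v else 0 := by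
  rcases eq_or_ne u a0 with rfl | h
  · simp only [Prod.mk.injEq, true_and]
    rw [Finset.sum_ite_eq univ v W, if_pos (Finset.mem_univ v)]
    simp
  · rw [if_neg h]
    refine Finset.sum_eq_zero fun d0 _ => if_neg ?_
    simp only [Prod.mk.injEq]
    tauto

lemma Aop_succ (k : ℕ) (a b : Fin (k + 1) → Fin m) :
    Aop n (k + 1) a b
      = Eop (a 0) (b 0) * Aop n k (a ∘ Fin.succ) (b ∘ Fin.succ)
        + (if b 0 = a 0 then (n : ℂ) • Aop n k (a ∘ Fin.succ) (b ∘ Fin.succ) else 0)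
        + ∑ j : Fin k, if b j.succ = a 0
            then Aop n k (a ∘ Fin.succ) (Function.update (b ∘ Fin.succ) j (b 0)) else 0 := by
  classical
  set ta := a ∘ Fin.succ with hta
  set tb := b ∘ Fin.succ with htb
  set S : (Fin k → Fin n) → En :=
    fun dt => Dpr (fun i => (tb i, dt i)) * ml (∏ i : Fin k, X (ta i, dt i)) with hS
  set S' : Fin k → (Fin k → Fin n) → En :=
    fun j dt => Dpr (fun i => (Function.update tb j (b 0) i, dt i))
      * ml (∏ i : Fin k, X (ta i, dt i)) with hS'
  have hAop : Aop n k ta tb = ∑ dt, S dt := rfl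
  have hAop' : ∀ j, Aop n k ta (Function.update tb j (b 0)) = ∑ dt, S' j dt := fun j => rfl
  -- the per-(d0,dt) expansion
  have key : ∀ (d0 : Fin n) (dt : Fin k → Fin n),
      Dpr (fun i => (b i, (Fin.cons d0 dt : Fin (k + 1) → Fin n) i)) * ml (∏ i, X (a i, (Fin.cons d0 dt : Fin (k + 1) → Fin n) i))
        = (ml (X (a 0, d0)) * pd7 (b 0, d0)) * S dt
          + (if b 0 = a 0 then S dt else 0)
          + ∑ j : Fin k, (if (b j.succ, dt j) = (a 0, d0) then S' j dt else 0) := by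
    intro d0 dt
    have hl : (fun i : Fin (k + 1) => (b i, (Fin.cons d0 dt : Fin (k + 1) → Fin n) i)) ∘ Fin.succ
        = fun i : Fin k => (tb i, dt i) := by
      funext i
      simp [htb, Fin.cons_succ]
    have hprod : (∏ i : Fin (k + 1), (X (a i, (Fin.cons d0 dt : Fin (k + 1) → Fin n) i) : P))
        = X (a 0, d0) * ∏ i : Fin k, X (ta i, dt i) := by
      rw [Fin.prod_univ_succ]
      simp [hta, Fin.cons_succ, Fin.cons_zero]
    rw [hprod, ml_mul, ← mul_assoc, Dpr_ml_X, add_mul, Finset.sum_mul, Fin.sum_univ_succ]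
    have h1 : ml (X (a 0, d0)) * Dpr (fun i => (b i, (Fin.cons d0 dt : Fin (k + 1) → Fin n) i))
          * ml (∏ i : Fin k, X (ta i, dt i))
        = (ml (X (a 0, d0)) * pd7 (b 0, d0)) * S dt := by
      rw [Dpr_succ, hl]
      simp only [Fin.cons_zero, hS]
      noncomm_ring
    have h2 : (if (fun i : Fin (k+1) => (b i, (Fin.cons d0 dt : Fin (k + 1) → Fin n) i)) 0 = (a 0, d0)
            then Dpr ((fun i : Fin (k+1) => (b i, (Fin.cons d0 dt : Fin (k + 1) → Fin n) i)) ∘ (0 : Fin (k+1)).succAbove)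
            else 0) * ml (∏ i : Fin k, X (ta i, dt i))
        = if b 0 = a 0 then S dt else 0 := by
      have hc : ((fun i : Fin (k+1) => (b i, (Fin.cons d0 dt : Fin (k + 1) → Fin n) i)) 0 = ((a 0, d0) : Fin m × Fin n))
          ↔ b 0 = a 0 := by
        simp [Fin.cons_zero, Prod.ext_iff]
      rw [Fin.succAbove_zero, hl]
      split_ifs with hc1 hc2 hc2
      · rfl
      · exact absurd (hc.mp hc1) hc2
      · exact absurd (hc.mpr hc2) hc1
      · rw [zero_mul]
    have h3 : ∀ j : Fin k,
        (if (fun i : Fin (k+1) => (b i, (Fin.cons d0 dt : Fin (k + 1) → Fin n) i)) j.succ = (a 0, d0)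
            then Dpr ((fun i : Fin (k+1) => (b i, (Fin.cons d0 dt : Fin (k + 1) → Fin n) i)) ∘ (j.succ).succAbove)
            else 0) * ml (∏ i : Fin k, X (ta i, dt i))
        = if (b j.succ, dt j) = (a 0, d0) then S' j dt else 0 := by
      intro j
      have hc : (fun i : Fin (k+1) => (b i, (Fin.cons d0 dt : Fin (k + 1) → Fin n) i)) j.succ = ((b j.succ, dt j) : Fin m × Fin n) := by
        simp [Fin.cons_succ]
      rw [hc]
      split_ifs with hcc
      · have hd0 : d0 = dt j := by
          have := (Prod.ext_iff.mp hcc).2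
          exact this.symm
        subst hd0
        rw [Dpr_reorder b dt j]
      · rw [zero_mul]
    rw [h1, h2, Finset.sum_congr rfl fun j _ => h3 j, ← add_assoc]
  -- sum the expansion over d = (d0, dt)
  have hsplit : Aop n (k + 1) a b
      = ∑ d0 : Fin n, ∑ dt : Fin k → Fin n,
          Dpr (fun i => (b i, (Fin.cons d0 dt : Fin (k + 1) → Fin n) i)) * ml (∏ i, X (a i, (Fin.cons d0 dt : Fin (k + 1) → Fin n) i)) := by
    rw [Aop, ← Equiv.sum_comp (Fin.consEquiv fun _ => Fin n)
      (fun d : Fin (k+1) → Fin n => Dpr (fun i => (b i, d i)) * ml (∏ i, X (a i, d i))),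
      Fintype.sum_prod_type]
    rfl
  rw [hsplit, Finset.sum_congr rfl fun d0 _ => Finset.sum_congr rfl fun dt _ => key d0 dt]
  simp only [Finset.sum_add_distrib]
  congr 1
  · congr 1
    · have hE : Eop (a 0) (b 0) = ∑ c : Fin n, ml (X (a 0, c)) * pd7 (b 0, c) := rfl
      rw [hE, Finset.sum_mul]
      exact Finset.sum_congr rfl fun d0 _ => by rw [hAop, Finset.mul_sum]
    · by_cases hc : b 0 = a 0
      · simp only [if_pos hc]
        rw [Finset.sum_const, Finset.card_univ, Fintype.card_fin, hAop]
        exact (Nat.cast_smul_eq_nsmul ℂ n _).symm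
      · simp only [if_neg hc, Finset.sum_const_zero]
  · rw [Finset.sum_comm]
    rw [Finset.sum_congr rfl fun dt _ => Finset.sum_comm]
    rw [Finset.sum_congr rfl fun dt (_ : dt ∈ univ) => Finset.sum_congr rfl fun j _ =>
      sum_pair_ite (b j.succ) (a 0) (dt j) (fun _ => S' j dt)]
    rw [Finset.sum_comm]
    refine Finset.sum_congr rfl fun j _ => ?_
    by_cases hc : b j.succ = a 0
    · simp only [if_pos hc]
      exact (hAop' j).symm
    · simp only [if_neg hc, Finset.sum_const_zero]

/-- scalar shadow of `Aop` on a product of `s` maximal minors -/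
noncomputable def alp (n : ℕ) {m : ℕ} (s : ℂ) : (k : ℕ) → (Fin k → Fin m) → (Fin k → Fin m) → ℂ
  | 0, _, _ => 1
  | (k + 1), a, b =>
      (if b 0 = a 0 then (s + n) * alp n s k (a ∘ Fin.succ) (b ∘ Fin.succ) else 0)
      + ∑ j : Fin k, if b j.succ = a 0
          then alp n s k (a ∘ Fin.succ) (Function.update (b ∘ Fin.succ) j (b 0)) else 0

lemma Aop_eval {s : ℕ} (Is : Fin s → {I : Finset (Fin n) // I.card = m}) :
    ∀ (k : ℕ) (a b : Fin k → Fin m),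
      Aop n k a b (∏ j : Fin s, maxMinor7 (Is j))
        = alp n (s : ℂ) k a b • ∏ j : Fin s, maxMinor7 (Is j) := by
  intro k
  induction k with
  | zero =>
    intro a b
    rw [Aop_zero]
    rw [show alp n (s : ℂ) 0 a b = 1 from rfl, one_smul]
    rfl
  | succ k ih =>
    intro a b
    set F := ∏ j : Fin s, maxMinor7 (Is j) with hF
    set ta := a ∘ Fin.succ with hta
    set tb := b ∘ Fin.succ with htb
    have halp : alp n (s : ℂ) (k + 1) a b
        = (if b 0 = a 0 then ((s : ℂ) + n) * alp n (s : ℂ) k ta tb else 0)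
          + ∑ j : Fin k, if b j.succ = a 0
              then alp n (s : ℂ) k ta (Function.update tb j (b 0)) else 0 := rfl
    rw [Aop_succ, halp, LinearMap.add_apply, LinearMap.add_apply, Module.End.mul_apply, ih,
      map_smul, Eop_prodMinors, LinearMap.sum_apply]
    have hsum : ∀ j : Fin k,
        ((if b j.succ = a 0 then Aop n k ta (Function.update tb j (b 0)) else 0) : En) F
        = (if b j.succ = a 0 then alp n (s : ℂ) k ta (Function.update tb j (b 0)) else 0) • F := by
      intro j
      split_ifs with hc
      · rw [ih]
      · rw [LinearMap.zero_apply, zero_smul]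
    rw [Finset.sum_congr rfl fun j _ => hsum j, ← Finset.sum_smul, add_smul]
    congr 1
    have hmid : ((if b 0 = a 0 then (n : ℂ) • Aop n k ta tb else 0) : En) F
        = (if b 0 = a 0 then (n : ℂ) * alp n (s : ℂ) k ta tb else 0) • F := by
      split_ifs with hc
      · rw [LinearMap.smul_apply, ih, smul_smul]
      · rw [LinearMap.zero_apply, zero_smul]
    rw [hmid]
    by_cases hc : b 0 = a 0
    · rw [if_pos hc, if_pos hc.symm, if_pos hc, smul_smul, ← add_smul]
      congr 1
      ring
    · rw [if_neg hc, if_neg (fun hh => hc hh.symm), if_neg hc]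
      simp

/-- the signed sum over permutations -/
noncomputable def Gsum (n : ℕ) {m : ℕ} (s : ℂ) (k : ℕ) (ι : Fin k → Fin m) : ℂ :=
  ∑ π : Equiv.Perm (Fin k), ((Equiv.Perm.sign π : ℤ) : ℂ) * alp n s k ι (ι ∘ ⇑π)

lemma Gsum_succ (s : ℂ) (k : ℕ) (ι : Fin (k + 1) → Fin m) (hι : Function.Injective ι) :
    Gsum n s (k + 1) ι = (s + (n : ℂ) - k) * Gsum n s k (ι ∘ Fin.succ) := by
  have hG : Gsum n s k (ι ∘ Fin.succ)
      = ∑ σ : Equiv.Perm (Fin k),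
          ((Equiv.Perm.sign σ : ℤ) : ℂ) * alp n s k (ι ∘ Fin.succ) ((ι ∘ Fin.succ) ∘ ⇑σ) := rfl
  rw [Gsum, Finset.univ_perm_fin_succ, Finset.sum_map, Fintype.sum_prod_type,
    Fin.sum_univ_succ]
  simp only [Equiv.coe_toEmbedding]
  have hterm0 : ∀ σ : Equiv.Perm (Fin k),
      ((Equiv.Perm.sign (Equiv.Perm.decomposeFin.symm ((0 : Fin (k + 1)), σ)) : ℤ) : ℂ)
        * alp n s (k + 1) ι (ι ∘ ⇑(Equiv.Perm.decomposeFin.symm (0, σ)))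
      = ((Equiv.Perm.sign σ : ℤ) : ℂ)
          * ((s + n) * alp n s k (ι ∘ Fin.succ) ((ι ∘ Fin.succ) ∘ ⇑σ)) := by
    intro σ
    set π := Equiv.Perm.decomposeFin.symm ((0 : Fin (k + 1)), σ) with hπ
    have hsg : Equiv.Perm.sign π = Equiv.Perm.sign σ := by
      rw [hπ, Equiv.Perm.decomposeFin.symm_sign, if_pos rfl, one_mul]
    have hb0 : (ι ∘ ⇑π) 0 = ι 0 := by
      simp [hπ, Equiv.Perm.decomposeFin_symm_apply_zero]
    have htail : (ι ∘ ⇑π) ∘ Fin.succ = (ι ∘ Fin.succ) ∘ ⇑σ := by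
      funext i
      simp [hπ, Equiv.Perm.decomposeFin_symm_apply_succ, Equiv.swap_self]
    have hjzero : ∀ j : Fin k, ¬ ((ι ∘ ⇑π) j.succ = ι 0) := by
      intro j hj
      have h2 : π j.succ = 0 := hι hj
      rw [hπ, Equiv.Perm.decomposeFin_symm_apply_succ, Equiv.swap_self] at h2
      exact Fin.succ_ne_zero _ h2
    have halp : alp n s (k + 1) ι (ι ∘ ⇑π)
        = (if (ι ∘ ⇑π) 0 = ι 0
            then (s + n) * alp n s k (ι ∘ Fin.succ) ((ι ∘ ⇑π) ∘ Fin.succ) else 0)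
          + ∑ j : Fin k, if (ι ∘ ⇑π) j.succ = ι 0
              then alp n s k (ι ∘ Fin.succ)
                (Function.update ((ι ∘ ⇑π) ∘ Fin.succ) j ((ι ∘ ⇑π) 0)) else 0 := rfl
    rw [halp, if_pos hb0, htail, Finset.sum_congr rfl fun j _ => if_neg (hjzero j),
      Finset.sum_const_zero, add_zero, hsg]
  have hterm1 : ∀ (q : Fin k) (σ : Equiv.Perm (Fin k)),
      ((Equiv.Perm.sign (Equiv.Perm.decomposeFin.symm (q.succ, σ)) : ℤ) : ℂ)
        * alp n s (k + 1) ι (ι ∘ ⇑(Equiv.Perm.decomposeFin.symm (q.succ, σ)))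
      = -(((Equiv.Perm.sign σ : ℤ) : ℂ)
          * alp n s k (ι ∘ Fin.succ) ((ι ∘ Fin.succ) ∘ ⇑σ)) := by
    intro q σ
    set π := Equiv.Perm.decomposeFin.symm (q.succ, σ) with hπ
    have hb0 : π 0 = q.succ := Equiv.Perm.decomposeFin_symm_apply_zero q.succ σ
    have hsg : ((Equiv.Perm.sign π : ℤ) : ℂ) = -((Equiv.Perm.sign σ : ℤ) : ℂ) := by
      rw [hπ, Equiv.Perm.decomposeFin.symm_sign, if_neg (Fin.succ_ne_zero q)]
      push_cast
      ring
    have hcond0 : ¬ ((ι ∘ ⇑π) 0 = ι 0) := by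
      intro h
      have h2 : π 0 = 0 := hι h
      rw [hb0] at h2
      exact Fin.succ_ne_zero q h2
    have hcondj : ∀ j : Fin k, ((ι ∘ ⇑π) j.succ = ι 0) ↔ j = σ⁻¹ q := by
      intro j
      constructor
      · intro h
        have h2 : π j.succ = 0 := hι h
        rw [hπ, Equiv.Perm.decomposeFin_symm_apply_succ] at h2
        have h4 : Equiv.swap (0 : Fin (k + 1)) q.succ q.succ = 0 :=
          Equiv.swap_apply_right _ _
        have h3 : (σ j).succ = q.succ := (Equiv.swap _ _).injective (h2.trans h4.symm)
        have h5 : σ j = q := Fin.succ_injective _ h3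
        rw [← h5]
        exact (σ.symm_apply_apply j).symm
      · rintro rfl
        show ι (π (σ⁻¹ q).succ) = ι 0
        have h6 : π (σ⁻¹ q).succ = 0 := by
          rw [hπ, Equiv.Perm.decomposeFin_symm_apply_succ, Equiv.Perm.inv_def, Equiv.apply_symm_apply]
          exact Equiv.swap_apply_right _ _
        rw [h6]
    have hval : Function.update ((ι ∘ ⇑π) ∘ Fin.succ) (σ⁻¹ q) ((ι ∘ ⇑π) 0)
        = (ι ∘ Fin.succ) ∘ ⇑σ := by
      funext i
      rcases eq_or_ne i (σ⁻¹ q) with rfl | hne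
      · rw [Function.update_self]
        show ι (π 0) = ι (σ (σ⁻¹ q)).succ
        rw [hb0, Equiv.Perm.inv_def, Equiv.apply_symm_apply]
      · rw [Function.update_of_ne hne]
        show ι (π i.succ) = ι (σ i).succ
        have h6 : π i.succ = (σ i).succ := by
          rw [hπ, Equiv.Perm.decomposeFin_symm_apply_succ]
          apply Equiv.swap_apply_of_ne_of_ne
          · exact Fin.succ_ne_zero _
          · intro hh
            exact hne ((σ.symm_apply_apply i).symm.trans
              (by rw [Fin.succ_injective _ hh]; rfl))
        rw [h6]
    have halp : alp n s (k + 1) ι (ι ∘ ⇑π)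
        = (if (ι ∘ ⇑π) 0 = ι 0
            then (s + n) * alp n s k (ι ∘ Fin.succ) ((ι ∘ ⇑π) ∘ Fin.succ) else 0)
          + ∑ j : Fin k, if (ι ∘ ⇑π) j.succ = ι 0
              then alp n s k (ι ∘ Fin.succ)
                (Function.update ((ι ∘ ⇑π) ∘ Fin.succ) j ((ι ∘ ⇑π) 0)) else 0 := rfl
    rw [halp, if_neg hcond0, zero_add, Finset.sum_eq_single (σ⁻¹ q)]
    · rw [if_pos ((hcondj _).mpr rfl), hval, hsg]
      ring
    · intro j _ hj
      exact if_neg (fun hh => hj ((hcondj j).mp hh))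
    · intro h
      exact absurd (Finset.mem_univ _) h
  rw [Finset.sum_congr rfl fun σ _ => hterm0 σ,
    Finset.sum_congr rfl fun q (_ : q ∈ univ) => Finset.sum_congr rfl fun σ _ => hterm1 q σ]
  have h1 : ∑ σ : Equiv.Perm (Fin k), ((Equiv.Perm.sign σ : ℤ) : ℂ)
        * ((s + n) * alp n s k (ι ∘ Fin.succ) ((ι ∘ Fin.succ) ∘ ⇑σ))
      = (s + n) * Gsum n s k (ι ∘ Fin.succ) := by
    rw [hG, Finset.mul_sum]
    exact Finset.sum_congr rfl fun σ _ => by ring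
  have h2 : ∑ q : Fin k, ∑ σ : Equiv.Perm (Fin k),
        -(((Equiv.Perm.sign σ : ℤ) : ℂ)
          * alp n s k (ι ∘ Fin.succ) ((ι ∘ Fin.succ) ∘ ⇑σ))
      = -((k : ℂ) * Gsum n s k (ι ∘ Fin.succ)) := by
    have hin : ∑ σ : Equiv.Perm (Fin k),
        -(((Equiv.Perm.sign σ : ℤ) : ℂ)
          * alp n s k (ι ∘ Fin.succ) ((ι ∘ Fin.succ) ∘ ⇑σ))
        = -Gsum n s k (ι ∘ Fin.succ) := by
      rw [hG, ← Finset.sum_neg_distrib]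
    rw [Finset.sum_congr rfl fun q _ => hin, Finset.sum_const, Finset.card_univ,
      Fintype.card_fin, nsmul_eq_mul]
    push_cast
    ring
  rw [h1, h2]
  ring

lemma colEmb_inj (I : {I : Finset (Fin n) // I.card = m}) :
    Function.Injective (colEmb7 I) := by
  intro i j h
  exact (I.1.orderIsoOfFin I.2).injective (Subtype.coe_injective h)

lemma colEmb_mem (I : {I : Finset (Fin n) // I.card = m}) (j : Fin m) :
    colEmb7 I j ∈ I.1 := (I.1.orderIsoOfFin I.2 j).2

lemma colEmb_image (I : {I : Finset (Fin n) // I.card = m}) :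
    Finset.image (colEmb7 I) Finset.univ = I.1 := by
  ext x
  simp only [Finset.mem_image]
  constructor
  · rintro ⟨j, -, rfl⟩
    exact colEmb_mem I j
  · intro hx
    exact ⟨(I.1.orderIsoOfFin I.2).symm ⟨x, hx⟩, Finset.mem_univ _, by
      simp [colEmb7]⟩

noncomputable def dSub (d : Fin m → Fin n) (hd : Function.Injective d) :
    {I : Finset (Fin n) // I.card = m} :=
  ⟨Finset.image d Finset.univ, by
    rw [Finset.card_image_of_injective _ hd, Finset.card_univ, Fintype.card_fin]⟩

noncomputable def dPerm (d : Fin m → Fin n) (hd : Function.Injective d) :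
    Equiv.Perm (Fin m) :=
  Equiv.ofBijective
    (fun i => ((dSub d hd).1.orderIsoOfFin (dSub d hd).2).symm
      ⟨d i, Finset.mem_image.mpr ⟨i, Finset.mem_univ i, rfl⟩⟩)
    (by
      rw [← Finite.injective_iff_bijective]
      intro i j h
      apply hd
      have h2 := congrArg (fun z => ((((dSub d hd).1.orderIsoOfFin (dSub d hd).2) z : (dSub d hd).1) : Fin n)) h
      simpa using h2)

lemma dPerm_spec (d : Fin m → Fin n) (hd : Function.Injective d) (i : Fin m) :
    colEmb7 (dSub d hd) (dPerm d hd i) = d i := by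
  simp [colEmb7, dPerm, Equiv.ofBijective_apply]

lemma inj_reindex (π : Equiv.Perm (Fin m)) (S0 : (Fin m → Fin n) → En) :
    (∑ I : {I : Finset (Fin n) // I.card = m}, ∑ τ : Equiv.Perm (Fin m),
        S0 (colEmb7 I ∘ ⇑τ))
      = ∑ d ∈ Finset.univ.filter (fun d : Fin m → Fin n => Function.Injective d), S0 d := by
  classical
  rw [← Finset.sum_product']
  refine Finset.sum_bij' (fun p _ => colEmb7 p.1 ∘ ⇑p.2)
    (fun d hd => (dSub d (Finset.mem_filter.mp hd).2, dPerm d (Finset.mem_filter.mp hd).2))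
    ?_ ?_ ?_ ?_ ?_
  · intro p _
    rw [Finset.mem_filter]
    exact ⟨Finset.mem_univ _, (colEmb_inj p.1).comp p.2.injective⟩
  · intro d hd
    exact Finset.mem_univ _
  · intro p hp
    have hinj : Function.Injective (colEmb7 p.1 ∘ ⇑p.2) := (colEmb_inj p.1).comp p.2.injective
    have hIeq : dSub (colEmb7 p.1 ∘ ⇑p.2) hinj = p.1 := by
      apply Subtype.ext
      show Finset.image (colEmb7 p.1 ∘ ⇑p.2) Finset.univ = (p.1 : Finset (Fin n))
      rw [← Finset.image_image, Finset.image_univ_of_surjective p.2.surjective,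
        colEmb_image]
    have hPeq : dPerm (colEmb7 p.1 ∘ ⇑p.2) hinj = p.2 := by
      apply Equiv.ext
      intro i
      apply colEmb_inj p.1
      have hs := dPerm_spec (colEmb7 p.1 ∘ ⇑p.2) hinj i
      rw [hIeq] at hs
      rw [hs]
      rfl
    rw [Prod.ext_iff]
    exact ⟨hIeq, hPeq⟩
  · intro d hd
    funext i
    exact dPerm_spec d (Finset.mem_filter.mp hd).2 i
  · intro p _
    rfl

lemma noninj_vanish (d : Fin m → Fin n) (hd : ¬ Function.Injective d) :
    (∑ π : Equiv.Perm (Fin m), (Equiv.Perm.sign π : ℤ) •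
        (Dpr (fun i => (π i, d i)) * ml (∏ i, X (i, d i)))) = 0 := by
  obtain ⟨i1, i2, heq, hne⟩ := Function.not_injective_iff.mp hd
  set sw := Equiv.swap i1 i2 with hsw
  have hdsw : ∀ i, d (sw i) = d i := by
    intro i
    rcases eq_or_ne i i1 with rfl | h1
    · rw [hsw, Equiv.swap_apply_left]; exact heq.symm
    rcases eq_or_ne i i2 with rfl | h2
    · rw [hsw, Equiv.swap_apply_right]; exact heq
    · rw [hsw, Equiv.swap_apply_of_ne_of_ne h1 h2]
  have hS : ∀ π : Equiv.Perm (Fin m),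
      Dpr (fun i => ((π * sw) i, d i)) = Dpr (fun i => (π i, d i)) := by
    intro π
    have hcc : (fun i => (π i, d i)) ∘ ⇑sw = fun i => ((π * sw) i, d i) := by
      funext i
      simp only [Function.comp_apply, Equiv.Perm.mul_apply, hdsw i]
    rw [← hcc, Dpr_comp]
  have hsgn : ∀ π : Equiv.Perm (Fin m),
      ((Equiv.Perm.sign (π * sw) : ℤ)) = -(Equiv.Perm.sign π : ℤ) := by
    intro π
    rw [map_mul, Equiv.Perm.sign_swap hne]
    simp
  set T := ∑ π : Equiv.Perm (Fin m), (Equiv.Perm.sign π : ℤ) •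
      (Dpr (fun i => (π i, d i)) * ml (∏ i, X (i, d i))) with hT
  have hcomp := Equiv.sum_comp (Equiv.mulRight sw)
    (fun π : Equiv.Perm (Fin m) => (Equiv.Perm.sign π : ℤ) •
      (Dpr (fun i => (π i, d i)) * ml (∏ i, X (i, d i))))
  simp only [Equiv.coe_mulRight] at hcomp
  have hterm : ∀ π : Equiv.Perm (Fin m),
      (Equiv.Perm.sign (π * sw) : ℤ) • (Dpr (fun i => ((π * sw) i, d i)) * ml (∏ i, X (i, d i)))
      = -((Equiv.Perm.sign π : ℤ) • (Dpr (fun i => (π i, d i)) * ml (∏ i, X (i, d i)))) := by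
    intro π
    rw [hS π, hsgn π, neg_smul]
  have h2 : T = -T := by
    conv_lhs => rw [hT, ← hcomp]
    rw [Finset.sum_congr rfl fun π _ => hterm π, Finset.sum_neg_distrib]
  have h4 : (2 : ℂ) • T = 0 := by
    rw [two_smul]
    nth_rewrite 2 [h2]
    exact add_neg_cancel T
  rcases smul_eq_zero.mp h4 with h | h
  · norm_num at h
  · exact h

lemma boundary :
    (∑ I : {I : Finset (Fin n) // I.card = m}, minorOp7 I * ml (maxMinor7 I))
      = ∑ π : Equiv.Perm (Fin m),
          (Equiv.Perm.sign π : ℤ) • Aop n m (fun i => i) ⇑π := by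
  classical
  set S : Equiv.Perm (Fin m) → (Fin m → Fin n) → En :=
    fun π d => Dpr (fun i => (π i, d i)) * ml (∏ i, X (i, d i)) with hSdef
  have hA : ∀ I : {I : Finset (Fin n) // I.card = m},
      minorOp7 I * ml (maxMinor7 I)
        = ∑ τ : Equiv.Perm (Fin m), ∑ π : Equiv.Perm (Fin m),
            (Equiv.Perm.sign π : ℤ) • S π (colEmb7 I ∘ ⇑τ⁻¹) := by
    intro I
    have h1 : minorOp7 I = ∑ υ : Equiv.Perm (Fin m),
        (Equiv.Perm.sign υ : ℤ) • Dpr (fun a_ => (a_, colEmb7 I (υ a_))) := rfl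
    have h2 : maxMinor7 I = ∑ τ : Equiv.Perm (Fin m),
        (Equiv.Perm.sign τ : ℤ) • ∏ j, (X (τ j, colEmb7 I j) : P) := by
      rw [maxMinor7, Matrix.det_apply]
      exact Finset.sum_congr rfl fun τ _ => by rw [Units.smul_def]; rfl
    rw [h1, h2, ml_sum]
    rw [Finset.sum_mul_sum]
    rw [Finset.sum_comm]
    refine Finset.sum_congr rfl fun τ _ => ?_
    have e : Equiv.Perm (Fin m) ≃ Equiv.Perm (Fin m) :=
      (Equiv.inv _).trans (Equiv.mulLeft τ⁻¹)
    refine ((Equiv.sum_comp ((Equiv.inv _).trans (Equiv.mulLeft τ⁻¹))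
      (fun υ : Equiv.Perm (Fin m) => (Equiv.Perm.sign υ : ℤ) • Dpr (fun a_ => (a_, colEmb7 I (υ a_)))
        * ml ((Equiv.Perm.sign τ : ℤ) • ∏ j, (X (τ j, colEmb7 I j) : P)))).symm).trans ?_
    refine Finset.sum_congr rfl fun π _ => ?_
    simp only [Equiv.trans_apply, Equiv.inv_apply, Equiv.coe_mulLeft]
    -- υ = τ⁻¹ * π⁻¹
    have hsgn : ((Equiv.Perm.sign (τ⁻¹ * π⁻¹) : ℤ)) * (Equiv.Perm.sign τ : ℤ)
        = (Equiv.Perm.sign π : ℤ) := by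
      rw [map_mul, Equiv.Perm.sign_inv, Equiv.Perm.sign_inv]
      rcases Int.units_eq_one_or (Equiv.Perm.sign τ) with h | h <;>
        rcases Int.units_eq_one_or (Equiv.Perm.sign π) with h' | h' <;>
          simp [h, h']
    have hD : Dpr (fun a_ => (a_, colEmb7 I ((τ⁻¹ * π⁻¹) a_)))
        = Dpr (fun i => (π i, (colEmb7 I ∘ ⇑τ⁻¹) i)) := by
      have hcc : (fun i => (π i, (colEmb7 I ∘ ⇑τ⁻¹) i)) ∘ ⇑π⁻¹
          = fun a_ => (a_, colEmb7 I ((τ⁻¹ * π⁻¹) a_)) := by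
        funext a_
        simp [Equiv.Perm.mul_apply]
      rw [← hcc, Dpr_comp]
    have hM : (∏ j, (X (τ j, colEmb7 I j) : P)) = ∏ i, (X (i, (colEmb7 I ∘ ⇑τ⁻¹) i) : P) := by
      refine Fintype.prod_equiv τ _ _ fun j => ?_
      simp
    rw [hD, hM, ml_zsmul, smul_mul_assoc, mul_smul_comm, smul_smul, hsgn]
  rw [Finset.sum_congr rfl fun I _ => hA I]
  -- reindex τ ↦ τ⁻¹ and push sums around
  have hinv : ∀ I : {I : Finset (Fin n) // I.card = m},
      (∑ τ : Equiv.Perm (Fin m), ∑ π : Equiv.Perm (Fin m),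
        (Equiv.Perm.sign π : ℤ) • S π (colEmb7 I ∘ ⇑τ⁻¹))
      = ∑ τ : Equiv.Perm (Fin m), ∑ π : Equiv.Perm (Fin m),
        (Equiv.Perm.sign π : ℤ) • S π (colEmb7 I ∘ ⇑τ) := by
    intro I
    exact Equiv.sum_comp (Equiv.inv (Equiv.Perm (Fin m)))
      (fun τ => ∑ π : Equiv.Perm (Fin m), (Equiv.Perm.sign π : ℤ) • S π (colEmb7 I ∘ ⇑τ))
  rw [Finset.sum_congr rfl fun I _ => hinv I]
  -- bring π to the outside
  have hswap : (∑ I : {I : Finset (Fin n) // I.card = m}, ∑ τ : Equiv.Perm (Fin m),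
        ∑ π : Equiv.Perm (Fin m), (Equiv.Perm.sign π : ℤ) • S π (colEmb7 I ∘ ⇑τ))
      = ∑ π : Equiv.Perm (Fin m), (Equiv.Perm.sign π : ℤ) •
          (∑ I : {I : Finset (Fin n) // I.card = m}, ∑ τ : Equiv.Perm (Fin m),
            S π (colEmb7 I ∘ ⇑τ)) := by
    rw [Finset.sum_congr rfl fun I (_ : I ∈ univ) => Finset.sum_comm, Finset.sum_comm]
    refine Finset.sum_congr rfl fun π _ => ?_
    rw [Finset.smul_sum]
    refine Finset.sum_congr rfl fun I _ => ?_
    rw [Finset.smul_sum]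
  rw [hswap]
  have hLHS : ∀ π : Equiv.Perm (Fin m),
      (Equiv.Perm.sign π : ℤ) • (∑ I : {I : Finset (Fin n) // I.card = m},
        ∑ τ : Equiv.Perm (Fin m), S π (colEmb7 I ∘ ⇑τ))
      = (Equiv.Perm.sign π : ℤ) •
          (∑ d ∈ Finset.univ.filter (fun d : Fin m → Fin n => Function.Injective d), S π d) := by
    intro π
    rw [inj_reindex π (S π)]
  rw [Finset.sum_congr rfl fun π (_ : π ∈ univ) => hLHS π]
  have hR : ∀ π : Equiv.Perm (Fin m),
      (Equiv.Perm.sign π : ℤ) • Aop n m (fun i => i) ⇑π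
      = (Equiv.Perm.sign π : ℤ) •
          (∑ d ∈ Finset.univ.filter (fun d : Fin m → Fin n => Function.Injective d), S π d)
        + ∑ d ∈ Finset.univ.filter (fun d : Fin m → Fin n => ¬ Function.Injective d),
            (Equiv.Perm.sign π : ℤ) • S π d := by
    intro π
    have hAop : Aop n m (fun i => i) ⇑π = ∑ d : Fin m → Fin n, S π d := rfl
    rw [hAop, ← Finset.sum_filter_add_sum_filter_not Finset.univ
      (fun d : Fin m → Fin n => Function.Injective d) (S π), smul_add]
    congr 1
    exact Finset.smul_sum
  rw [Finset.sum_congr rfl fun π (_ : π ∈ univ) => hR π, Finset.sum_add_distrib]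
  have h0 : (∑ π : Equiv.Perm (Fin m),
      ∑ d ∈ Finset.univ.filter (fun d : Fin m → Fin n => ¬ Function.Injective d),
        (Equiv.Perm.sign π : ℤ) • S π d) = 0 := by
    rw [Finset.sum_comm]
    refine Finset.sum_eq_zero fun d hd => ?_
    exact noninj_vanish d (Finset.mem_filter.mp hd).2
  rw [h0, add_zero]

lemma Gsum_prod (s : ℂ) (hmn : m ≤ n) :
    ∀ (k : ℕ), k ≤ m → ∀ (ι : Fin k → Fin m), Function.Injective ι →
      Gsum n s k ι = ∏ t ∈ Finset.range k, (s + ((n - t : ℕ) : ℂ)) := by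
  intro k
  induction k with
  | zero =>
    intro hk ι hι
    rw [Finset.range_zero, Finset.prod_empty, Gsum]
    have h1 : ∀ π : Equiv.Perm (Fin 0),
        ((Equiv.Perm.sign π : ℤ) : ℂ) * alp n s 0 ι (ι ∘ ⇑π) = 1 := by
      intro π
      have hπ : π = 1 := Subsingleton.elim _ _
      rw [hπ, show alp n s 0 ι (ι ∘ ⇑(1 : Equiv.Perm (Fin 0))) = 1 from rfl]
      simp
    rw [Finset.sum_congr rfl fun π _ => h1 π, Finset.sum_const, Finset.card_univ]
    simp
  | succ k ih =>
    intro hk ι hι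
    rw [Gsum_succ s k ι hι,
      ih (Nat.le_of_succ_le hk) (ι ∘ Fin.succ) (hι.comp (Fin.succ_injective k)),
      Finset.prod_range_succ]
    have hkn : k ≤ n := le_trans (Nat.le_of_succ_le hk) hmn
    rw [Nat.cast_sub hkn]
    ring

end MME

/-- Eigenvalue identity for the invariant operator attached to maximal minors:
there is a nonzero constant `c`, depending only on `m` and `n`, such that for every
`s ∈ ℕ` and every choice of column subsets `I₁,…,I_s` of cardinality `m`,
`Σ_{|I|=m} det(∂X_I)(det(X_I)·∏_j det(X_{I_j}))
  = c·(∏_{i=n-m+1}^{n}(s+i))·∏_j det(X_{I_j})`. -/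
theorem maximal_minors_eigenvalue (m n : ℕ) (hm : 1 ≤ m) (hmn : m ≤ n) :
    ∃ c : ℂ, c ≠ 0 ∧ ∀ (s : ℕ) (Is : Fin s → {I : Finset (Fin n) // I.card = m}),
      (∑ I : {I : Finset (Fin n) // I.card = m},
          minorOp7 I (maxMinor7 I * ∏ j : Fin s, maxMinor7 (Is j))) =
        (c * ∏ i ∈ Finset.Icc (n - m + 1) n, ((s : ℂ) + i)) •
          ∏ j : Fin s, maxMinor7 (Is j) := by
  refine ⟨1, one_ne_zero, ?_⟩
  intro s Is
  set F := ∏ j : Fin s, maxMinor7 (Is j) with hF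
  have h1 : (∑ I : {I : Finset (Fin n) // I.card = m},
      minorOp7 I (maxMinor7 I * F))
      = (∑ I : {I : Finset (Fin n) // I.card = m},
          minorOp7 I * MME.ml (maxMinor7 I)) F := by
    rw [LinearMap.sum_apply]
    rfl
  rw [h1, MME.boundary, LinearMap.sum_apply]
  have h2 : ∀ π : Equiv.Perm (Fin m),
      ((Equiv.Perm.sign π : ℤ) • MME.Aop n m (fun i => i) ⇑π) F
        = (((Equiv.Perm.sign π : ℤ) : ℂ)
            * MME.alp n (s : ℂ) m (fun i => i) ⇑π) • F := by
    intro π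
    rw [LinearMap.smul_apply, MME.Aop_eval Is m (fun i => i) ⇑π,
      ← Int.cast_smul_eq_zsmul ℂ, smul_smul]
  have h3 : (∑ π : Equiv.Perm (Fin m),
      ((Equiv.Perm.sign π : ℤ) : ℂ) * MME.alp n (s : ℂ) m (fun i => i) ⇑π)
      = MME.Gsum n (s : ℂ) m (fun i => i) := by
    rw [MME.Gsum]
    exact Finset.sum_congr rfl fun π _ => rfl
  rw [Finset.sum_congr rfl fun π (_ : π ∈ Finset.univ) => h2 π, ← Finset.sum_smul, h3,
    MME.Gsum_prod (s : ℂ) hmn m le_rfl (fun i => i) (fun a b h => h)]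
  congr 1
  rw [one_mul]
  refine Finset.prod_nbij' (fun t => n - t) (fun i => n - i) ?_ ?_ ?_ ?_ ?_
  · intro t ht
    simp only [Finset.mem_range] at ht
    simp only [Finset.mem_Icc]
    omega
  · intro i hi
    simp only [Finset.mem_Icc] at hi
    simp only [Finset.mem_range]
    omega
  · intro t ht
    simp only [Finset.mem_range] at ht
    show n - (n - t) = t
    omega
  · intro i hi
    simp only [Finset.mem_Icc] at hi
    show n - (n - i) = i
    omega
  · intro t ht
    rfl
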